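/- Let α₁,…,α_g be unit complex numbers, t_i = α_i + α_i^{-1}, and let a_j denote the j-th elementary symmetric polynomial of the 2g numbers α₁, α₁^{-1}, …, α_g, α_g^{-1}, and s_i the i-th elementary symmetric polynomial of t₁,…,t_g (with a₀ = s₀ = 1). Then for 0 ≤ j ≤ g, a_j = Σ_{i=0}^{g} c_{i,j} s_i where c_{i,j} = binom(g-i, g-(i+j)/2) if i + j is even and c_{i,j} = 0 if i + j is odd. -/

import Mathlib

open Polynomial Finset

private lemma aux_coeff_sq (n d : ℕ) :
    ((X ^ 2 + 1 : Polynomial ℂ) ^ n).coeff d =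
      if Even d then ((n.choose (d / 2) : ℕ) : ℂ) else 0 := by
  rw [add_pow, finset_sum_coeff]
  simp only [one_pow, mul_one, ← pow_mul, ← Polynomial.C_eq_natCast, coeff_mul_C, coeff_X_pow]
  by_cases hd : Even d
  · obtain ⟨m, rfl⟩ := hd
    rw [Finset.sum_eq_single m]
    · simp [show m + m = 2 * m by ring]
    · intro k _ hkm
      rw [if_neg (by omega), zero_mul]
    · intro hm
      rw [Finset.mem_range, not_lt] at hm
      rw [if_pos (by ring : m + m = 2 * m), one_mul,
        Nat.choose_eq_zero_of_lt (by omega : n < m)]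
      simp
  · rw [if_neg hd]
    refine Finset.sum_eq_zero fun k _ => ?_
    rw [if_neg (fun h => hd ⟨k, by omega⟩), zero_mul]

/-- For unit complex numbers `α i` with `t i = α i + (α i)⁻¹`, let
`a j = e_j(α₁, α₁⁻¹, …, α_g, α_g⁻¹)` and `s i = e_i(t₁, …, t_g)`. Then for `0 ≤ j ≤ g`,
`a j = ∑_{i=0}^g c i j * s i`, where `c i j = binom(g-i, g-(i+j)/2)` if `i + j` is even
(`binom(n,k) = 0` for `k > n`) and `c i j = 0` if `i + j` is odd. -/
theorem stmt9 (g : ℕ) (hg : 0 < g) (α : Fin g → ℂ) (hα : ∀ i, ‖α i‖ = 1)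
    (j : ℕ) (hj : j ≤ g) :
    let M : Multiset ℂ :=
      (Finset.univ.val.map α) + (Finset.univ.val.map fun i => (α i)⁻¹)
    let a : ℕ → ℂ := fun j => M.esymm j
    let s : ℕ → ℂ := fun i => (Finset.univ.val.map fun i => α i + (α i)⁻¹).esymm i
    let c : ℕ → ℕ → ℂ := fun i j =>
      if Even (i + j) then ((g - i).choose (g - (i + j) / 2) : ℂ) else 0
    a j = ∑ i ∈ Finset.range (g + 1), c i j * s i := by
  intro M a s c
  classical
  have hα0 : ∀ i, α i ≠ 0 := by
    intro i h
    have := hα i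
    rw [h] at this
    simp at this
  set t : Fin g → ℂ := fun i => α i + (α i)⁻¹ with ht
  have hMcard : Multiset.card M = 2 * g := by
    simp [M]
    ring
  -- Step A : a j is a coefficient of the product of linear factors
  have hA : a j = (M.map fun r => X + C r).prod.coeff (2 * g - j) := by
    rw [Multiset.prod_X_add_C_coeff M (by omega : 2 * g - j ≤ Multiset.card M), hMcard]
    have : 2 * g - (2 * g - j) = j := by omega
    rw [this]
  -- Step B : the product of linear factors equals ∏ ((t i) X + (X² + 1))
  have hB : (M.map fun r => X + C r).prod
      = ∏ i : Fin g, (C (t i) * X + (X ^ 2 + 1)) := by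
    have h1 : (M.map fun r => X + C r).prod
        = (∏ i : Fin g, (X + C (α i))) * ∏ i : Fin g, (X + C (α i)⁻¹) := by
      simp [M, Multiset.map_add, Multiset.prod_add, Multiset.map_map, Finset.prod,
        Function.comp_def]
    rw [h1, ← Finset.prod_mul_distrib]
    refine Finset.prod_congr rfl fun i _ => ?_
    have h2 : α i * (α i)⁻¹ = 1 := mul_inv_cancel₀ (hα0 i)
    calc (X + C (α i)) * (X + C (α i)⁻¹)
        = X ^ 2 + C (α i + (α i)⁻¹) * X + C (α i * (α i)⁻¹) := by
          rw [C_add, C_mul]; ring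
      _ = C (t i) * X + (X ^ 2 + 1) := by rw [h2, C_1]; ring
  -- Step C : expand the product over subsets, grouped by cardinality
  have hC : (∏ i : Fin g, (C (t i) * X + (X ^ 2 + 1)))
      = ∑ k ∈ Finset.range (g + 1), C (s k) * ((X ^ 2 + 1) ^ (g - k) * X ^ k) := by
    rw [Finset.prod_add]
    rw [Finset.powerset_card_biUnion,
      Finset.sum_biUnion (fun i _ j _ hij => Finset.pairwise_disjoint_powersetCard _ hij)]
    rw [show (Finset.univ : Finset (Fin g)).card = g from Finset.card_univ.trans (Fintype.card_fin g)]
    refine Finset.sum_congr rfl fun k hk => ?_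
    have hs : s k = ∑ S ∈ Finset.powersetCard k (Finset.univ : Finset (Fin g)), ∏ i ∈ S, t i := by
      simp only [s, Finset.esymm_map_val]
      rfl
    rw [hs, map_sum, Finset.sum_mul]
    refine Finset.sum_congr rfl fun S hS => ?_
    rw [Finset.mem_powersetCard] at hS
    have hcardS : S.card = k := hS.2
    have hcardC : (Finset.univ \ S).card = g - k := by
      rw [Finset.card_sdiff_of_subset (Finset.subset_univ S), hcardS, Finset.card_univ, Fintype.card_fin]
    rw [Finset.prod_mul_distrib, Finset.prod_const, hcardS, Finset.prod_const, hcardC,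
      ← map_prod]
    ring
  -- Step D : extract the coefficient
  rw [hA, hB, hC, finset_sum_coeff]
  refine Finset.sum_congr rfl fun k hk => ?_
  rw [Finset.mem_range] at hk
  rw [coeff_C_mul, coeff_mul_X_pow' _ k (2 * g - j), if_pos (by omega), aux_coeff_sq]
  rw [mul_comm (c k j)]
  congr 1
  simp only [c]
  have hkj : Even (2 * g - j - k) ↔ Even (k + j) := by
    rw [Nat.even_iff, Nat.even_iff]
    omega
  by_cases h : Even (k + j)
  · rw [if_pos (hkj.mpr h), if_pos h]
    congr 2
    rw [Nat.even_iff] at h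
    omega
  · rw [if_neg (fun hh => h (hkj.mp hh)), if_neg h]
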